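/- Let S be a closed densely defined coercive sectorial operator (Re⟨Sf,f⟩ ≥ m‖f‖², m > 0). Then for x ∈ ℝ∖{0}, the operator T_{ix} := S_{ix} + ix·I is sectorial: |Im⟨T_{ix}g, g⟩| ≤ (k + |x|/m)·Re⟨T_{ix}g, g⟩ for all g ∈ dom S_{ix}, where k is the sectoriality constant of S. -/
import Mathlib


open scoped ComplexInnerProductSpace

/-- Let `S` be a closed densely defined coercive sectorial operator
(`Re⟪S f, f⟫ ≥ m ‖f‖²` with `m > 0`, and `|Im⟪S f, f⟫| ≤ k Re⟪S f, f⟫`).  For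
`x ∈ ℝ \ {0}`, the operator `T_{ix} := S_{ix} + ix·I` is sectorial:
`|Im⟪T_{ix} g, g⟫| ≤ (k + |x|/m) Re⟪T_{ix} g, g⟫` for all `g = f + φ ∈ dom S_{ix}`,
where `T_{ix} g = S f + ix f` for `f ∈ dom S`, `φ ∈ N_{ix} = ker(S* − ix)`. -/
theorem shifted_extension_sectorial
    {E : Type*} [NormedAddCommGroup E] [InnerProductSpace ℂ E] [CompleteSpace E]
    (S : E →ₗ.[ℂ] E)
    (hdense : Dense (S.domain : Set E))
    (hclosed : S.IsClosed)
    (m k : ℝ) (hm : 0 < m)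
    (hco : ∀ f : S.domain, m * ‖(f : E)‖ ^ 2 ≤ (⟪S f, (f : E)⟫).re)
    (hsec : ∀ f : S.domain, |(⟪S f, (f : E)⟫).im| ≤ k * (⟪S f, (f : E)⟫).re)
    (x : ℝ) (hx : x ≠ 0)
    (f : S.domain) (φ : E) (hφ : φ ∈ S.adjoint.domain)
    (heig : S.adjoint ⟨φ, hφ⟩ = (Complex.I * x) • φ) :
    |(⟪S f + (Complex.I * x) • (f : E), (f : E) + φ⟫).im|
      ≤ (k + |x| / m) * (⟪S f + (Complex.I * x) • (f : E), (f : E) + φ⟫).re := by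
  have hadj : ⟪S.adjoint ⟨φ, hφ⟩, (f : E)⟫ = ⟪φ, S f⟫ :=
    S.adjoint_isFormalAdjoint hdense ⟨φ, hφ⟩ f
  rw [heig] at hadj
  have hcross : ⟪S f, φ⟫ = (Complex.I * x) * ⟪(f : E), φ⟫ := by
    have := congrArg (starRingEnd ℂ) hadj
    rw [inner_conj_symm, inner_conj_symm, inner_smul_right] at this
    exact this.symm
  have hself : ⟪(f : E), (f : E)⟫ = ((‖(f : E)‖ ^ 2 : ℝ) : ℂ) := by
    exact_mod_cast inner_self_eq_norm_sq_to_K (𝕜 := ℂ) (f : E)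
  have hkey : ⟪S f + (Complex.I * x) • (f : E), (f : E) + φ⟫
      = ⟪S f, (f : E)⟫ - (Complex.I * x) * ((‖(f : E)‖ ^ 2 : ℝ) : ℂ) := by
    have hc : (starRingEnd ℂ) (Complex.I * x) = -(Complex.I * x) := by
      rw [map_mul, Complex.conj_I, Complex.conj_ofReal]; ring
    rw [inner_add_right, inner_add_left, inner_add_left, inner_smul_left, inner_smul_left,
      hself, hcross, hc]
    ring
  rw [hkey]
  have hre : (⟪S f, (f:E)⟫ - (Complex.I * x) * ((‖(f : E)‖ ^ 2 : ℝ) : ℂ)).re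
      = (⟪S f, (f:E)⟫).re := by
    simp [Complex.sub_re, Complex.mul_re, Complex.mul_im]
    exact Or.inr (by rw [← Complex.ofReal_pow]; exact Complex.ofReal_im _)
  have him : (⟪S f, (f:E)⟫ - (Complex.I * x) * ((‖(f : E)‖ ^ 2 : ℝ) : ℂ)).im
      = (⟪S f, (f:E)⟫).im - x * ‖(f : E)‖ ^ 2 := by
    simp [Complex.sub_im, Complex.mul_im, Complex.mul_re]
    exact Or.inl (by rw [← Complex.ofReal_pow]; exact Complex.ofReal_re _)
  rw [hre, him]
  have h1 := hsec f
  have h2 := hco f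
  have h3 : |x| * ‖(f : E)‖ ^ 2 ≤ (|x| / m) * (⟪S f, (f:E)⟫).re := by
    rw [div_mul_eq_mul_div, le_div_iff₀ hm]
    calc |x| * ‖(f : E)‖ ^ 2 * m = |x| * (m * ‖(f : E)‖ ^ 2) := by ring
      _ ≤ |x| * (⟪S f, (f:E)⟫).re := mul_le_mul_of_nonneg_left h2 (abs_nonneg x)
  calc |(⟪S f, (f:E)⟫).im - x * ‖(f : E)‖ ^ 2|
      ≤ |(⟪S f, (f:E)⟫).im| + |x * ‖(f : E)‖ ^ 2| := abs_sub _ _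
    _ = |(⟪S f, (f:E)⟫).im| + |x| * ‖(f : E)‖ ^ 2 := by
        rw [abs_mul, abs_of_nonneg (by positivity : (0:ℝ) ≤ ‖(f : E)‖ ^ 2)]
    _ ≤ k * (⟪S f, (f:E)⟫).re + (|x| / m) * (⟪S f, (f:E)⟫).re := add_le_add h1 h3
    _ = (k + |x| / m) * (⟪S f, (f:E)⟫).re := by ring
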